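/- For all n ≥ 0, if the Zeckendorf representation of n is the digit string w, then the number whose Zeckendorf digit string is w followed by 0 equals ⌊(n+1)φ⌋ − 1, where φ = (1+√5)/2. Equivalently, Σᵢ aᵢF_{i+1} = ⌊(n+1)φ⌋ − 1 when n = Σᵢ aᵢFᵢ is the Zeckendorf representation of n. -/

import Mathlib

noncomputable def phi : ℝ := (1 + Real.sqrt 5) / 2

noncomputable def psi : ℝ := (1 - Real.sqrt 5) / 2

lemma sqrt5_sq : Real.sqrt 5 * Real.sqrt 5 = 5 := Real.mul_self_sqrt (by norm_num)

lemma sqrt5_gt : (2:ℝ) < Real.sqrt 5 := by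
  nlinarith [sqrt5_sq, Real.sqrt_nonneg 5]

lemma sqrt5_lt : Real.sqrt 5 < 3 := by
  nlinarith [sqrt5_sq, Real.sqrt_nonneg 5]

lemma psi_neg : psi < 0 := by unfold psi; linarith [sqrt5_gt]

lemma psi_gt : -1 < psi := by unfold psi; linarith [sqrt5_lt]

lemma psi_sq : psi ^ 2 = psi + 1 := by
  unfold psi; linear_combination sqrt5_sq / 4

lemma phi_psi : phi = 1 - psi := by unfold phi psi; ring

lemma phi_sq : phi ^ 2 = phi + 1 := by
  unfold phi; linear_combination sqrt5_sq / 4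

lemma psi_sq_pos : (0:ℝ) < psi ^ 2 := by nlinarith [psi_neg]

lemma e1 : phi - 2 = -(psi ^ 2) := by rw [phi_psi]; linear_combination psi_sq

lemma e2 : psi ^ 2 * phi = phi - 1 := by
  rw [phi_psi]; linear_combination (-psi) * psi_sq

lemma fib_key (i : ℕ) : (Nat.fib (i+1) : ℝ) = phi * Nat.fib i + psi ^ i := by
  induction i with
  | zero => simp [phi]
  | succ k ih =>
    rw [Nat.fib_add_two]
    push_cast
    have h1 : phi + psi = 1 := by unfold phi psi; ring
    linear_combination (1 - phi) * ih - (Nat.fib k : ℝ) * phi_sq - psi ^ k * h1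

lemma sum_psi_bounds : ∀ T (b : ℕ → ℕ), (∀ i, b i ≤ 1) →
    -1 < ∑ i ∈ Finset.range T, (b i : ℝ) * psi ^ i ∧
    ∑ i ∈ Finset.range T, (b i : ℝ) * psi ^ i < phi := by
  intro T
  induction T using Nat.strong_induction_on with
  | _ T ih =>
    match T with
    | 0 =>
      intro b hb
      simp only [Finset.range_zero, Finset.sum_empty]
      refine ⟨by norm_num, by rw [phi_psi]; linarith [psi_neg]⟩
    | 1 =>
      intro b hb
      have hb0 : (b 0 : ℝ) ≤ 1 := by exact_mod_cast hb 0
      have hb0' : (0:ℝ) ≤ (b 0 : ℝ) := by positivity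
      simp only [Finset.sum_range_one, pow_zero, mul_one]
      refine ⟨by linarith, by rw [phi_psi]; linarith [psi_neg]⟩
    | (T+2) =>
      intro b hb
      have h2 := ih T (by omega) (fun i => b (i+2)) (fun i => hb (i+2))
      rw [Finset.sum_range_succ', Finset.sum_range_succ']
      have hre : ∀ i ∈ Finset.range T, ((b (i+1+1) : ℝ)) * psi ^ (i+1+1)
          = psi ^ 2 * ((b (i+2) : ℝ) * psi ^ i) := by
        intro i _; ring
      rw [Finset.sum_congr rfl hre, ← Finset.mul_sum]
      set I := ∑ i ∈ Finset.range T, (b (i+2) : ℝ) * psi ^ i with hI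
      obtain ⟨hIl, hIu⟩ := h2
      have hb0 : (b 0 : ℝ) ≤ 1 := by exact_mod_cast hb 0
      have hb0' : (0:ℝ) ≤ (b 0 : ℝ) := by positivity
      have hb1 : (b 1 : ℝ) ≤ 1 := by exact_mod_cast hb 1
      have hb1' : (0:ℝ) ≤ (b 1 : ℝ) := by positivity
      have hA : psi ^ 2 * I < psi ^ 2 * phi := mul_lt_mul_of_pos_left hIu psi_sq_pos
      have hA' : -(psi ^ 2) < psi ^ 2 * I := by nlinarith [psi_sq_pos]
      have hC : (b 1 : ℝ) * psi ^ 1 ≤ 0 := by nlinarith [psi_neg]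
      have hC' : psi ≤ (b 1 : ℝ) * psi ^ 1 := by nlinarith [psi_neg]
      norm_num
      constructor
      · linarith [psi_sq]
      · linarith [e2]

theorem zeckendorf_shift_one (n T : ℕ) (a : ℕ → ℕ)
    (hbit : ∀ i, a i ≤ 1)
    (hnoconsec : ∀ i, a i * a (i + 1) = 0)
    (h0 : a 0 = 0) (h1 : a 1 = 0)
    (hrep : n = ∑ i ∈ Finset.range T, a i * Nat.fib i) :
    ∑ i ∈ Finset.range T, a i * Nat.fib (i + 1) = ⌊((n : ℝ) + 1) * phi⌋₊ - 1 := by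
  set S : ℕ := ∑ i ∈ Finset.range T, a i * Nat.fib (i + 1) with hS
  set ε : ℝ := ∑ i ∈ Finset.range T, (a i : ℝ) * psi ^ i with hε
  have key : (S : ℝ) = phi * n + ε := by
    rw [hS, hε, hrep]
    push_cast
    rw [Finset.mul_sum, ← Finset.sum_add_distrib]
    apply Finset.sum_congr rfl
    intro i _
    rw [fib_key i]
    ring
  have hphigt : (1:ℝ) < phi := by rw [phi_psi]; linarith [psi_neg]
  have hbound : phi - 2 < ε ∧ ε < phi - 1 := by
    match T with
    | 0 =>
      simp only [hε, Finset.range_zero, Finset.sum_empty]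
      exact ⟨by linarith [e1, psi_sq_pos], by linarith⟩
    | 1 =>
      simp only [hε, Finset.sum_range_one, h0, Nat.cast_zero, zero_mul]
      exact ⟨by linarith [e1, psi_sq_pos], by linarith⟩
    | (T+2) =>
      have h2 := sum_psi_bounds T (fun i => a (i+2)) (fun i => hbit (i+2))
      rw [hε, Finset.sum_range_succ', Finset.sum_range_succ']
      have hre : ∀ i ∈ Finset.range T, ((a (i+1+1) : ℝ)) * psi ^ (i+1+1)
          = psi ^ 2 * ((a (i+2) : ℝ) * psi ^ i) := by
        intro i _; ring
      rw [Finset.sum_congr rfl hre, ← Finset.mul_sum]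
      obtain ⟨hIl, hIu⟩ := h2
      set I := ∑ i ∈ Finset.range T, (a (i+2) : ℝ) * psi ^ i with hI
      have hA : psi ^ 2 * I < psi ^ 2 * phi := mul_lt_mul_of_pos_left hIu psi_sq_pos
      have hA' : -(psi ^ 2) < psi ^ 2 * I := by nlinarith [psi_sq_pos]
      norm_num [h0, h1]
      exact ⟨by linarith [e1], by linarith [e2]⟩
  have hfloor : ⌊((n : ℝ) + 1) * phi⌋₊ = S + 1 := by
    have hphipos : (0:ℝ) < phi := by linarith
    rw [Nat.floor_eq_iff (by positivity)]
    constructor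
    · push_cast
      nlinarith [hbound.2, key]
    · push_cast
      nlinarith [hbound.1, key]
  omega
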